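/- Let G be a 2-generated group containing a normal, non-abelian maximal subgroup M with Z(G) properly contained in Z(M), and let x ∈ M \ Z(M) and z ∈ Z(M) \ Z(G). Then x and z lie in distinct connected components of the non-commuting, non-generating graph nc(G) if and only if K ∩ M = Z(M) for every maximal subgroup K of G distinct from M. Otherwise, the distance d(x,z) in nc(G) is at most 4. -/

import Mathlib

open Subgroup

namespace NC

variable {G : Type*} [Group G]

/-- The centre of a subgroup `H`, realised as a subgroup of the ambient group `G`. -/
def centerOf (H : Subgroup G) : Subgroup G := H ⊓ Subgroup.centralizer (H : Set G)

/-- `H` is a maximal subgroup of `K` (both subgroups of the ambient group `G`). -/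
def IsMaximalIn (H K : Subgroup G) : Prop :=
  H < K ∧ ∀ T : Subgroup G, H < T → T ≤ K → T = K

/-- The non-commuting, non-generating graph of `G`: vertices `x, y` are adjacent
iff they do not commute and do not generate `G`.  (Central elements are isolated
vertices here; the paper simply removes them from the vertex set.) -/
def ncGraph (G : Type*) [Group G] : SimpleGraph G where
  Adj x y := x * y ≠ y * x ∧ Subgroup.closure {x, y} ≠ ⊤
  symm := by
    constructor
    intro x y h
    exact ⟨fun e => h.1 e.symm, by rw [Set.pair_comm]; exact h.2⟩
  loopless := by
    constructor
    intro x h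
    exact h.1 rfl

/-- The conjugate `g H g⁻¹` of a subgroup `H` by an element `g`. -/
def conjSub (g : G) (H : Subgroup G) : Subgroup G := H.map (MulAut.conj g).toMonoidHom

/-- "The quotient of `G` by the subgroup `H` is cyclic": every coset of `H` is a
power of a fixed coset.  For `H` normal this says exactly that `G/H` is cyclic. -/
def QuotCyclic (H : Subgroup G) : Prop := ∃ g : G, ∀ x : G, ∃ n : ℤ, x⁻¹ * g ^ n ∈ H

/-- `P` is a Sylow `p`-subgroup of `G`. -/
def IsSylowIn (p : ℕ) (P : Subgroup G) : Prop :=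
  IsPGroup p P ∧ ∀ R : Subgroup G, IsPGroup p R → P ≤ R → R = P

/-- The Frattini subgroup of a subgroup `P` (the intersection of the maximal
subgroups of `P`), realised as a subgroup of the ambient group. -/
def phiIn (P : Subgroup G) : Subgroup G := P ⊓ sInf {W : Subgroup G | IsMaximalIn W P}

/-- `G` has exactly two conjugacy classes of maximal subgroups. -/
def TwoMaxClasses (G : Type*) [Group G] : Prop :=
  ∃ K L : Subgroup G, IsCoatom K ∧ IsCoatom L ∧ (∀ g : G, conjSub g K ≠ L) ∧
    ∀ T : Subgroup G, IsCoatom T → (∃ g : G, T = conjSub g K) ∨ (∃ g : G, T = conjSub g L)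

/-- The induced subgraph of the non-commuting, non-generating graph on the
actual vertex set `G \ Z(G)`. -/
def ncSubgraph (G : Type*) [Group G] := (ncGraph G).induce {x : G | x ∉ Subgroup.center G}

open scoped Pointwise

lemma mem_centerOf_iff {M : Subgroup G} {g : G} :
    g ∈ centerOf M ↔ g ∈ M ∧ ∀ m ∈ M, m * g = g * m := by
  simp [centerOf, Subgroup.mem_inf, Subgroup.mem_centralizer_iff]

lemma centerOf_normal {M : Subgroup G} (hMn : M.Normal) : (centerOf M).Normal := by
  constructor
  intro n hn g
  rw [mem_centerOf_iff] at hn ⊢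
  refine ⟨hMn.conj_mem n hn.1 g, ?_⟩
  intro m hm
  have hm' : g⁻¹ * m * g ∈ M := by
    have := hMn.conj_mem m hm g⁻¹
    simpa using this
  have h := hn.2 _ hm'
  have e1 : m * (g * n * g⁻¹) = g * (g⁻¹ * m * g * n) * g⁻¹ := by group
  rw [e1, h]; group

lemma closure_pair_le {K : Subgroup G} {u v : G} (hu : u ∈ K) (hv : v ∈ K) :
    Subgroup.closure {u, v} ≤ K := by
  rw [Subgroup.closure_le]
  rintro g (rfl | rfl) <;> assumption

/-- adjacency inside a proper subgroup -/
lemma adj_of_mem {K : Subgroup G} (hK : K ≠ ⊤) {u v : G} (hu : u ∈ K) (hv : v ∈ K)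
    (h : u * v ≠ v * u) : (ncGraph G).Adj u v := by
  refine ⟨h, fun htop => hK ?_⟩
  exact top_unique (htop ▸ closure_pair_le hu hv)

lemma coatom_le_coatom {K M : Subgroup G} (hK : IsCoatom K) (hM : IsCoatom M)
    (h : K ≤ M) : K = M := by
  by_contra hne
  exact hM.1 (hK.2 M (lt_of_le_of_ne h hne))

lemma exists_coatom_ge (h2gen : ∃ a b : G, Subgroup.closure {a, b} = ⊤)
    {H : Subgroup G} (hH : H ≠ ⊤) : ∃ K : Subgroup G, IsCoatom K ∧ H ≤ K := by
  obtain ⟨a, b, hab⟩ := h2gen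
  have ih : ∀ c ⊆ {T : Subgroup G | T ≠ ⊤}, IsChain (· ≤ ·) c → ∀ y ∈ c,
      ∃ ub ∈ {T : Subgroup G | T ≠ ⊤}, ∀ z ∈ c, z ≤ ub := by
    intro c hc hchain y hy
    refine ⟨sSup c, ?_, fun T hT => le_sSup hT⟩
    intro htop
    have ha : a ∈ sSup c := htop ▸ Subgroup.mem_top a
    have hb : b ∈ sSup c := htop ▸ Subgroup.mem_top b
    rw [Subgroup.mem_sSup_of_directedOn ⟨y, hy⟩ hchain.directedOn] at ha hb
    obtain ⟨Ta, hTa, haT⟩ := ha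
    obtain ⟨Tb, hTb, hbT⟩ := hb
    rcases hchain.total hTa hTb with h | h
    · exact hc hTb (top_unique (hab ▸ closure_pair_le (h haT) hbT))
    · exact hc hTa (top_unique (hab ▸ closure_pair_le haT (h hbT)))
  obtain ⟨K, hHK, hKmax⟩ := zorn_le_nonempty₀ {T : Subgroup G | T ≠ ⊤} ih H hH
  refine ⟨K, ⟨hKmax.1, fun T hT => ?_⟩, hHK⟩
  by_contra hTne
  exact hT.2 (hKmax.2 hTne hT.1)

/-- Key: `Z(M)⟨w⟩` is always proper, since `M` is non-abelian. -/
lemma center_join_ne_top {M : Subgroup G} (hMn : M.Normal)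
    (hMna : ∃ a ∈ M, ∃ b ∈ M, a * b ≠ b * a) (w : G) :
    centerOf M ⊔ Subgroup.closure {w} ≠ ⊤ := by
  intro htop
  obtain ⟨a, ha, b, hb, hab⟩ := hMna
  haveI : (centerOf M).Normal := centerOf_normal hMn
  have hset : ((centerOf M ⊔ Subgroup.closure {w} : Subgroup G) : Set G) =
      (centerOf M : Set G) * (Subgroup.closure {w} : Set G) := Subgroup.normal_mul _ _
  have hdecomp : ∀ c : G, c ∈ M → ∃ s, s ∈ centerOf M ∧ ∃ i : ℤ, c = s * w ^ i ∧ w ^ i ∈ M := by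
    intro c hc
    have : c ∈ ((centerOf M ⊔ Subgroup.closure {w} : Subgroup G) : Set G) := by
      rw [htop]; trivial
    rw [hset] at this
    obtain ⟨s, hs, t, ht, hst⟩ := this
    obtain ⟨i, rfl⟩ := Subgroup.mem_closure_singleton.mp ht
    refine ⟨s, hs, i, hst.symm, ?_⟩
    have hsM : s ∈ M := (mem_centerOf_iff.mp hs).1
    have : s⁻¹ * c ∈ M := M.mul_mem (M.inv_mem hsM) hc
    rwa [← hst, ← mul_assoc, inv_mul_cancel, one_mul] at this
  obtain ⟨s, hs, i, rfl, hwi⟩ := hdecomp a ha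
  obtain ⟨t, ht, j, rfl, hwj⟩ := hdecomp b hb
  apply hab
  have hsc := (mem_centerOf_iff.mp hs).2
  have htc := (mem_centerOf_iff.mp ht).2
  have hsM : s ∈ M := (mem_centerOf_iff.mp hs).1
  have htM : t ∈ M := (mem_centerOf_iff.mp ht).1
  have c1 : Commute s t := (hsc t htM).symm
  have c2 : Commute s (w ^ j) := (hsc _ hwj).symm
  have c3 : Commute (w ^ i) t := (htc _ hwi)
  have c4 : Commute (w ^ i) (w ^ j) := Commute.zpow_zpow (Commute.refl w) i j
  exact ((c1.mul_right c2).mul_left (c3.mul_right c4)).eq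

/-- The centraliser of `z ∈ Z(M) \ Z(G)` is exactly `M`. -/
lemma comm_imp_mem {M : Subgroup G} (hM : IsCoatom M) {z : G}
    (hz : z ∈ centerOf M) (hzZ : z ∉ Subgroup.center G) :
    ∀ g : G, z * g = g * z → g ∈ M := by
  have hMC : M ≤ Subgroup.centralizer {z} := by
    intro m hm
    rw [Subgroup.mem_centralizer_iff]
    rintro h rfl
    exact ((mem_centerOf_iff.mp hz).2 m hm).symm
  have hCne : Subgroup.centralizer {z} ≠ ⊤ := by
    intro htop
    apply hzZ
    rw [Subgroup.mem_center_iff]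
    intro g
    have : g ∈ Subgroup.centralizer {z} := htop ▸ Subgroup.mem_top g
    rw [Subgroup.mem_centralizer_iff] at this
    exact (this z rfl).symm
  have hCM : Subgroup.centralizer {z} = M := by
    by_contra hne
    exact hCne (hM.2 _ (lt_of_le_of_ne hMC (Ne.symm hne)))
  intro g hg
  rw [← hCM]
  rw [Subgroup.mem_centralizer_iff]
  rintro h rfl
  exact hg

/-- `z` is adjacent (in `ncGraph G`) to every element outside `M`. -/
lemma z_adj_outside {M : Subgroup G} (hM : IsCoatom M) (hMn : M.Normal)
    (hMna : ∃ a ∈ M, ∃ b ∈ M, a * b ≠ b * a) {z : G}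
    (hz : z ∈ centerOf M) (hzZ : z ∉ Subgroup.center G) {w : G} (hw : w ∉ M) :
    (ncGraph G).Adj z w := by
  constructor
  · intro h
    exact hw (comm_imp_mem hM hz hzZ w h)
  · intro htop
    apply center_join_ne_top hMn hMna w
    rw [eq_top_iff, ← htop]
    apply closure_pair_le
    · exact Subgroup.mem_sup_left hz
    · exact Subgroup.mem_sup_right (Subgroup.subset_closure rfl)

/-- diameter ≤ 2 inside `M` (non-commuting graph of a non-abelian group). -/
lemma walk_in_M {M : Subgroup G} (hM : IsCoatom M) {u v : G} (hu : u ∈ M)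
    (huZ : u ∉ centerOf M) (hv : v ∈ M) (hvZ : v ∉ centerOf M) :
    ∃ p : (ncGraph G).Walk u v, p.length ≤ 2 := by
  have hwit : ∀ c : G, c ∈ M → c ∉ centerOf M → ∃ t, t ∈ M ∧ t * c ≠ c * t := by
    intro c hc hcZ
    by_contra hno
    push_neg at hno
    exact hcZ (mem_centerOf_iff.mpr ⟨hc, hno⟩)
  by_cases hcom : u * v = v * u
  · obtain ⟨t, htM, htu⟩ := hwit u hu huZ
    obtain ⟨s, hsM, hsv⟩ := hwit v hv hvZ
    by_cases h1 : t * v = v * t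
    · by_cases h2 : s * u = u * s
      · -- use t * s
        have hts : t * s ∈ M := M.mul_mem htM hsM
        have e1 : u * (t * s) ≠ (t * s) * u := by
          intro h
          have h' : (u * t) * s = (t * u) * s := by
            calc (u * t) * s = u * (t * s) := by rw [mul_assoc]
              _ = (t * s) * u := h
              _ = t * (s * u) := by rw [mul_assoc]
              _ = t * (u * s) := by rw [h2]
              _ = (t * u) * s := by rw [mul_assoc]
          exact htu (mul_right_cancel h').symm
        have e2 : (t * s) * v ≠ v * (t * s) := by
          intro h
          have h' : t * (s * v) = t * (v * s) := by
            calc t * (s * v) = (t * s) * v := by rw [mul_assoc]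
              _ = v * (t * s) := h
              _ = (v * t) * s := by rw [mul_assoc]
              _ = (t * v) * s := by rw [h1]
              _ = t * (v * s) := by rw [mul_assoc]
          exact hsv (mul_left_cancel h')
        exact ⟨SimpleGraph.Walk.cons (adj_of_mem hM.1 hu hts e1)
          (SimpleGraph.Walk.cons (adj_of_mem hM.1 hts hv e2) SimpleGraph.Walk.nil), by simp⟩
      · -- u - s - v
        refine ⟨SimpleGraph.Walk.cons (adj_of_mem hM.1 hu hsM ?_)
          (SimpleGraph.Walk.cons (adj_of_mem hM.1 hsM hv ?_) SimpleGraph.Walk.nil), by simp⟩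
        · exact fun h => h2 h.symm
        · exact fun h => hsv h
    · -- u - t - v
      refine ⟨SimpleGraph.Walk.cons (adj_of_mem hM.1 hu htM ?_)
        (SimpleGraph.Walk.cons (adj_of_mem hM.1 htM hv ?_) SimpleGraph.Walk.nil), by simp⟩
      · exact fun h => htu h.symm
      · exact fun h => h1 h
  · exact ⟨SimpleGraph.Walk.cons (adj_of_mem hM.1 hu hv hcom) SimpleGraph.Walk.nil, by simp⟩

lemma decomp_of_not_le {M : Subgroup G} (hMn : M.Normal) {K : Subgroup G}
    (hK : IsCoatom K) (hZK : ¬ centerOf M ≤ K) :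
    ∀ m ∈ M, ∃ k s : G, k ∈ K ⊓ M ∧ s ∈ centerOf M ∧ m = k * s := by
  have hlt : K < K ⊔ centerOf M := by
    refine lt_of_le_of_ne le_sup_left (fun h => hZK ?_)
    exact le_sup_right.trans h.ge
  have htop : K ⊔ centerOf M = ⊤ := hK.2 _ hlt
  haveI : (centerOf M).Normal := centerOf_normal hMn
  have hset : ((K ⊔ centerOf M : Subgroup G) : Set G) =
      (K : Set G) * (centerOf M : Set G) := Subgroup.mul_normal _ _
  intro m hm
  have : m ∈ ((K ⊔ centerOf M : Subgroup G) : Set G) := by rw [htop]; trivial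
  rw [hset] at this
  obtain ⟨k, hk, s, hs, hks⟩ := this
  have hsM : s ∈ M := (mem_centerOf_iff.mp hs).1
  have hkM : k ∈ M := by
    have h2 : m * s⁻¹ ∈ M := M.mul_mem hm (M.inv_mem hsM)
    rwa [← hks, mul_assoc, mul_inv_cancel, mul_one] at h2
  exact ⟨k, s, ⟨hk, hkM⟩, hs, hks.symm⟩

/-- The bridge lemma: if some maximal `K ≠ M` has `K ⊓ M ≠ Z(M)`, then there is an
edge of `ncGraph G` between `M \ Z(M)` and the complement of `M`. -/
lemma exists_bridge {M : Subgroup G} (hM : IsCoatom M) (hMn : M.Normal)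
    (hMna : ∃ a ∈ M, ∃ b ∈ M, a * b ≠ b * a)
    {z : G} (hz : z ∈ centerOf M) (hzZ : z ∉ Subgroup.center G)
    {K : Subgroup G} (hK : IsCoatom K) (hKM : K ≠ M) (hKMne : K ⊓ M ≠ centerOf M) :
    ∃ u w : G, u ∈ M ∧ u ∉ centerOf M ∧ w ∉ M ∧ (ncGraph G).Adj u w := by
  by_contra hno
  push_neg at hno
  have hcomm : ∀ u w : G, u ∈ M → u ∉ centerOf M → w ∉ M →
      Subgroup.closure {u, w} ≠ ⊤ → u * w = w * u := by
    intro u w h1 h2 h3 hclo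
    by_contra hne
    exact hno u w h1 h2 h3 ⟨hne, hclo⟩
  have hKnotle : ¬ K ≤ M := fun h => hKM (coatom_le_coatom hK hM h)
  obtain ⟨w₀, hw₀K, hw₀M⟩ := SetLike.not_le_iff_exists.mp hKnotle
  have star0 : ∀ c, c ∈ K → c ∈ M → c ∉ centerOf M → ∀ k, k ∈ K → k ∉ M →
      c * k = k * c := by
    intro c hcK hcM hcZ k hkK hkM
    exact hcomm c k hcM hcZ hkM
      (fun htop => hK.1 (top_unique (htop ▸ closure_pair_le hcK hkK)))
  have star : ∀ c, c ∈ K → c ∈ M → c ∉ centerOf M → ∀ k, k ∈ K → c * k = k * c := by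
    intro c hcK hcM hcZ k hkK
    by_cases hkM : k ∈ M
    · have hkw : k * w₀ ∈ K := K.mul_mem hkK hw₀K
      have hkwM : k * w₀ ∉ M := by
        intro h
        apply hw₀M
        have h2 := M.mul_mem (M.inv_mem hkM) h
        rwa [← mul_assoc, inv_mul_cancel, one_mul] at h2
      have h1 := star0 c hcK hcM hcZ (k * w₀) hkw hkwM
      have h2 := star0 c hcK hcM hcZ w₀ hw₀K hw₀M
      have h' : (c * k) * w₀ = (k * c) * w₀ := by
        calc (c * k) * w₀ = c * (k * w₀) := by rw [mul_assoc]
          _ = (k * w₀) * c := h1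
          _ = k * (w₀ * c) := by rw [mul_assoc]
          _ = k * (c * w₀) := by rw [← h2]
          _ = (k * c) * w₀ := by rw [mul_assoc]
      exact mul_right_cancel h'
    · exact star0 c hcK hcM hcZ k hkK hkM
  have habel_M : ¬ ∀ a ∈ M, ∀ b ∈ M, a * b = b * a := by
    obtain ⟨a, ha, b, hb, hab⟩ := hMna
    intro h
    exact hab (h a ha b hb)
  have hc₀ : ∃ c₀, c₀ ∈ K ⊓ M ∧ c₀ ∉ centerOf M := by
    by_cases hZK : centerOf M ≤ K
    · by_contra hnone
      push_neg at hnone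
      apply hKMne
      apply le_antisymm
      · intro d hd
        exact hnone d hd
      · exact le_inf hZK (fun d hd => (mem_centerOf_iff.mp hd).1)
    · by_contra hnone
      push_neg at hnone
      apply habel_M
      intro a ha b hb
      have hMZ : ∀ m ∈ M, m ∈ centerOf M := by
        intro m hm
        obtain ⟨k, s, hkKM, hsZ, rfl⟩ := decomp_of_not_le hMn hK hZK m hm
        exact (centerOf M).mul_mem (hnone k hkKM) hsZ
      exact ((mem_centerOf_iff.mp (hMZ b hb)).2 a ha)
  obtain ⟨c₀, hc₀KM, hc₀Z⟩ := hc₀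
  have hc₀K : c₀ ∈ K := hc₀KM.1
  have hc₀M : c₀ ∈ M := hc₀KM.2
  have star2 : ∀ d, d ∈ K → d ∈ M → ∀ k, k ∈ K → d * k = k * d := by
    intro d hdK hdM k hkK
    by_cases hdZ : d ∈ centerOf M
    · have hdc : d * c₀ ∈ K := K.mul_mem hdK hc₀K
      have hdcM : d * c₀ ∈ M := M.mul_mem hdM hc₀M
      have hdcZ : d * c₀ ∉ centerOf M := by
        intro h
        apply hc₀Z
        have h2 : d⁻¹ * (d * c₀) ∈ centerOf M :=
          (centerOf M).mul_mem ((centerOf M).inv_mem hdZ) h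
        rwa [← mul_assoc, inv_mul_cancel, one_mul] at h2
      have h1 := star (d * c₀) hdc hdcM hdcZ k hkK
      have h2 := star c₀ hc₀K hc₀M hc₀Z k hkK
      have h' : (d * k) * c₀ = (k * d) * c₀ := by
        calc (d * k) * c₀ = d * (k * c₀) := by rw [mul_assoc]
          _ = d * (c₀ * k) := by rw [← h2]
          _ = (d * c₀) * k := by rw [← mul_assoc]
          _ = k * (d * c₀) := h1
          _ = (k * d) * c₀ := by rw [← mul_assoc]
      exact mul_right_cancel h'
    · exact star d hdK hdM hdZ k hkK
  have habelK : ∀ k, k ∈ K → ∀ k', k' ∈ K → k * k' = k' * k := by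
    intro k hk k' hk'
    by_cases hkM : k ∈ M
    · exact star2 k hk hkM k' hk'
    · have hMk : M ⊔ Subgroup.closure {k} = ⊤ := by
        apply hM.2
        refine lt_of_le_of_ne le_sup_left (fun h => hkM ?_)
        have h2 : k ∈ M ⊔ Subgroup.closure {k} :=
          Subgroup.mem_sup_right (Subgroup.subset_closure rfl)
        rwa [← h] at h2
      have hset : ((M ⊔ Subgroup.closure {k} : Subgroup G) : Set G) =
          (M : Set G) * (Subgroup.closure {k} : Set G) := Subgroup.normal_mul _ _
      have hmem : k' ∈ ((M ⊔ Subgroup.closure {k} : Subgroup G) : Set G) := by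
        rw [hMk]; trivial
      rw [hset] at hmem
      obtain ⟨m, hm, t, ht, hmt⟩ := hmem
      obtain ⟨j, rfl⟩ := Subgroup.mem_closure_singleton.mp ht
      have hmt' : m * k ^ j = k' := hmt
      have hmK : m ∈ K := by
        have h2 : k' * (k ^ j)⁻¹ ∈ K := K.mul_mem hk' (K.inv_mem (K.zpow_mem hk j))
        rwa [← hmt', mul_assoc, mul_inv_cancel, mul_one] at h2
      have hcm := star2 m hmK hm k hk
      have hpow : k * k ^ j = k ^ j * k := ((Commute.refl k).zpow_right j).eq
      calc k * k' = k * (m * k ^ j) := by rw [← hmt']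
        _ = (k * m) * k ^ j := by rw [mul_assoc]
        _ = (m * k) * k ^ j := by rw [← hcm]
        _ = m * (k * k ^ j) := by rw [mul_assoc]
        _ = m * (k ^ j * k) := by rw [hpow]
        _ = (m * k ^ j) * k := by rw [mul_assoc]
        _ = k' * k := by rw [hmt']
  by_cases hZK : centerOf M ≤ K
  · apply hKM
    apply coatom_le_coatom hK hM
    intro k hk
    exact comm_imp_mem hM hz hzZ k (habelK z (hZK hz) k hk)
  · apply habel_M
    intro a ha b hb
    obtain ⟨k, s, hkKM, hsZ, rfl⟩ := decomp_of_not_le hMn hK hZK a ha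
    obtain ⟨k', s', hk'KM, hs'Z, rfl⟩ := decomp_of_not_le hMn hK hZK b hb
    have c1 : Commute k k' := habelK k hkKM.1 k' hk'KM.1
    have c2 : Commute k s' := (mem_centerOf_iff.mp hs'Z).2 k hkKM.2
    have c3 : Commute s k' := ((mem_centerOf_iff.mp hsZ).2 k' hk'KM.2).symm
    have c4 : Commute s s' := (mem_centerOf_iff.mp hs'Z).2 s (mem_centerOf_iff.mp hsZ).1
    exact ((c1.mul_right c2).mul_left (c3.mul_right c4)).eq

lemma step_mem (h2gen : ∃ a b : G, Subgroup.closure {a, b} = ⊤)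
    {M : Subgroup G} (hM : IsCoatom M)
    (hcond : ∀ K : Subgroup G, IsCoatom K → K ≠ M → K ⊓ M = centerOf M)
    {a a' : G} (ha : a ∈ M) (haZ : a ∉ centerOf M) (hadj : (ncGraph G).Adj a a') :
    a' ∈ M ∧ a' ∉ centerOf M := by
  obtain ⟨hne, hclo⟩ := hadj
  obtain ⟨K, hK, hle⟩ := exists_coatom_ge h2gen hclo
  have haK : a ∈ K := hle (Subgroup.subset_closure (by left; rfl))
  have ha'K : a' ∈ K := hle (Subgroup.subset_closure (by right; rfl))
  by_cases hKM : K = M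
  · refine ⟨hKM ▸ ha'K, ?_⟩
    intro ha'Z
    exact hne ((mem_centerOf_iff.mp ha'Z).2 a ha)
  · exact absurd (hcond K hK hKM ▸ Subgroup.mem_inf.mpr ⟨haK, ha⟩) haZ

lemma walk_invariant (h2gen : ∃ a b : G, Subgroup.closure {a, b} = ⊤)
    {M : Subgroup G} (hM : IsCoatom M)
    (hcond : ∀ K : Subgroup G, IsCoatom K → K ≠ M → K ⊓ M = centerOf M)
    {a b : G} (p : (ncGraph G).Walk a b) :
    a ∈ M → a ∉ centerOf M → b ∈ M ∧ b ∉ centerOf M := by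
  induction p with
  | nil => exact fun h1 h2 => ⟨h1, h2⟩
  | cons h q ih =>
      intro h1 h2
      have h3 := step_mem h2gen hM hcond h1 h2 h
      exact ih h3.1 h3.2

/-- Proposition 4.4(i) / `prop:xzdist`. -/
theorem statement_12 (h2gen : ∃ a b : G, Subgroup.closure {a, b} = ⊤)
    {M : Subgroup G} (hM : IsCoatom M) (hMn : M.Normal)
    (hMna : ∃ a ∈ M, ∃ b ∈ M, a * b ≠ b * a)
    (hZ : Subgroup.center G < centerOf M)
    {x z : G} (hx : x ∈ M) (hxZ : x ∉ centerOf M)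
    (hz : z ∈ centerOf M) (hzZ : z ∉ Subgroup.center G) :
    (¬ (ncGraph G).Reachable x z ↔
        ∀ K : Subgroup G, IsCoatom K → K ≠ M → K ⊓ M = centerOf M) ∧
      ((ncGraph G).Reachable x z → (ncGraph G).dist x z ≤ 4) := by
  have hbridge_dist : (∃ u w : G, u ∈ M ∧ u ∉ centerOf M ∧ w ∉ M ∧ (ncGraph G).Adj u w) →
      (ncGraph G).Reachable x z ∧ (ncGraph G).dist x z ≤ 4 := by
    rintro ⟨u, w, hu, huZ, hw, hadj⟩
    obtain ⟨p, hp⟩ := walk_in_M hM hx hxZ hu huZ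
    have hadj2 : (ncGraph G).Adj w z := (z_adj_outside hM hMn hMna hz hzZ hw).symm
    let q := p.append (SimpleGraph.Walk.cons hadj (SimpleGraph.Walk.cons hadj2
      SimpleGraph.Walk.nil))
    refine ⟨⟨q⟩, ?_⟩
    have hq : q.length = p.length + 2 := by simp [q]
    calc (ncGraph G).dist x z ≤ q.length := SimpleGraph.dist_le q
      _ = p.length + 2 := hq
      _ ≤ 4 := by omega
  have hnotreach : (∀ K : Subgroup G, IsCoatom K → K ≠ M → K ⊓ M = centerOf M) →
      ¬ (ncGraph G).Reachable x z := by
    intro hcond hreach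
    obtain ⟨p⟩ := hreach
    exact (walk_invariant h2gen hM hcond p hx hxZ).2 hz
  constructor
  · constructor
    · intro hnr K hK hKM
      by_contra hne
      exact hnr (hbridge_dist (exists_bridge hM hMn hMna hz hzZ hK hKM hne)).1
    · exact hnotreach
  · intro hreach
    by_cases hcond : ∀ K : Subgroup G, IsCoatom K → K ≠ M → K ⊓ M = centerOf M
    · exact absurd hreach (hnotreach hcond)
    · push_neg at hcond
      obtain ⟨K, hK, hKM, hne⟩ := hcond
      exact (hbridge_dist (exists_bridge hM hMn hMna hz hzZ hK hKM hne)).2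

end NC
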